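/- arXiv:1905.12608 — 2 statements merged into one kernel-verified Lean document; each statement's English description precedes it below -/
import Mathlib

section
/- Let α = (A_g, α_g)_{g∈G} be a partial action of a groupoid G on a ring A. Then α is global if and only if A_g = A_{t(g)} for all g ∈ G. -/
open CategoryTheory

universe u v w

/-- A partial action `α = (A_g, α_g)_{g ∈ G}` of a groupoid `G` on a (not necessarily unital)
ring `A`.  For a morphism `g : a ⟶ b` (source `a`, target `b`), `D g` is the subset `A_g ⊆ A`
and `act g` is the map `α_g`, which restricts to a ring isomorphism `A_{g⁻¹} → A_g`.
Objects are identified with their identity morphisms, so `A_{t(g)} = D (𝟙 b)`. -/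
structure PartialAction (G : Type u) [Groupoid G] (A : Type v) [NonUnitalRing A] where
  /-- the ideal `A_g` -/
  D : ∀ {a b : G}, (a ⟶ b) → Set A
  /-- the map `α_g` (only its restriction to `A_{g⁻¹}` is meaningful) -/
  act : ∀ {a b : G}, (a ⟶ b) → A → A
  zero_mem : ∀ {a b : G} (g : a ⟶ b), (0 : A) ∈ D g
  add_mem : ∀ {a b : G} (g : a ⟶ b), ∀ r ∈ D g, ∀ s ∈ D g, r + s ∈ D g
  neg_mem : ∀ {a b : G} (g : a ⟶ b), ∀ r ∈ D g, -r ∈ D g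
  /-- `A_g ⊆ A_{t(g)}` -/
  subset_target : ∀ {a b : G} (g : a ⟶ b), D g ⊆ D (𝟙 b)
  /-- `A_g` is an ideal of `A_{t(g)}` -/
  ideal_target_left : ∀ {a b : G} (g : a ⟶ b), ∀ r ∈ D (𝟙 b), ∀ s ∈ D g, r * s ∈ D g
  ideal_target_right : ∀ {a b : G} (g : a ⟶ b), ∀ r ∈ D (𝟙 b), ∀ s ∈ D g, s * r ∈ D g
  /-- `A_{t(g)}` is an ideal of `A` -/
  ideal_left : ∀ (b : G) (r : A), ∀ s ∈ D (𝟙 b), r * s ∈ D (𝟙 b)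
  ideal_right : ∀ (b : G) (r : A), ∀ s ∈ D (𝟙 b), s * r ∈ D (𝟙 b)
  /-- `α_g` maps `A_{g⁻¹}` into `A_g` ... -/
  mapsTo : ∀ {a b : G} (g : a ⟶ b), Set.MapsTo (act g) (D (Groupoid.inv g)) (D g)
  /-- ... injectively ... -/
  injOn : ∀ {a b : G} (g : a ⟶ b), Set.InjOn (act g) (D (Groupoid.inv g))
  /-- ... and onto `A_g`, -/
  surjOn : ∀ {a b : G} (g : a ⟶ b), Set.SurjOn (act g) (D (Groupoid.inv g)) (D g)
  /-- additively ... -/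
  act_add : ∀ {a b : G} (g : a ⟶ b), ∀ r ∈ D (Groupoid.inv g), ∀ s ∈ D (Groupoid.inv g),
    act g (r + s) = act g r + act g s
  /-- ... and multiplicatively, i.e. `α_g : A_{g⁻¹} → A_g` is a ring isomorphism. -/
  act_mul : ∀ {a b : G} (g : a ⟶ b), ∀ r ∈ D (Groupoid.inv g), ∀ s ∈ D (Groupoid.inv g),
    act g (r * s) = act g r * act g s
  /-- `α_x = id_{A_x}` for every object `x` -/
  act_id : ∀ (b : G), ∀ r ∈ D (𝟙 b), act (𝟙 b) r = r
  /-- `α_h⁻¹(A_{g⁻¹} ∩ A_h) ⊆ A_{(gh)⁻¹}` for composable `g, h`  -/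
  compat_mem : ∀ {a b c : G} (h : a ⟶ b) (g : b ⟶ c), ∀ r ∈ D (Groupoid.inv h),
    act h r ∈ D (Groupoid.inv g) → r ∈ D (Groupoid.inv (h ≫ g))
  /-- `α_{gh}(a) = α_g (α_h a)` on `α_h⁻¹(A_{g⁻¹} ∩ A_h)`, i.e. `α_g ∘ α_h ≤ α_{gh}` -/
  compat_act : ∀ {a b c : G} (h : a ⟶ b) (g : b ⟶ c), ∀ r ∈ D (Groupoid.inv h),
    act h r ∈ D (Groupoid.inv g) → act (h ≫ g) r = act g (act h r)

/-- A partial action is *global* if `α_g ∘ α_h = α_{gh}` (equality of partially defined maps: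
the domain `α_h⁻¹(A_{g⁻¹} ∩ A_h)` of `α_g ∘ α_h` coincides with `A_{(gh)⁻¹}`) for all
composable `g, h`. -/
def PartialAction.IsGlobal {G : Type u} [Groupoid G] {A : Type v} [NonUnitalRing A]
    (α : PartialAction G A) : Prop :=
  ∀ {a b c : G} (h : a ⟶ b) (g : b ⟶ c),
    (∀ r : A, r ∈ α.D (Groupoid.inv (h ≫ g)) ↔
      r ∈ α.D (Groupoid.inv h) ∧ α.act h r ∈ α.D (Groupoid.inv g)) ∧
    ∀ r ∈ α.D (Groupoid.inv (h ≫ g)), α.act (h ≫ g) r = α.act g (α.act h r)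

/-- **Lemma 1.1(i) (Bagio–Paques).** A partial action `α` of a groupoid `G` on a ring `A`
is global if and only if `A_g = A_{t(g)}` for every morphism `g` of `G`. -/
theorem partialAction_isGlobal_iff_D_eq_target {G : Type u} [Groupoid G] {A : Type v}
    [NonUnitalRing A] (α : PartialAction G A) :
    α.IsGlobal ↔ ∀ {a b : G} (g : a ⟶ b), α.D g = α.D (𝟙 b) := by
  constructor
  · intro hG a b g
    apply Set.Subset.antisymm (α.subset_target g)
    intro r hr
    have h := ((hG (Groupoid.inv g) g).1 r)
    rw [Groupoid.inv_comp] at h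
    have hinv : Groupoid.inv (𝟙 b) = 𝟙 b := by
      rw [Groupoid.inv_eq_inv]; simp
    rw [hinv] at h
    have h1 := (h.1 hr).1
    have h3 : Groupoid.inv (Groupoid.inv g) = g := by
      rw [Groupoid.inv_eq_inv, Groupoid.inv_eq_inv]; simp
    rwa [h3] at h1
  · intro hD a b c h g
    refine ⟨fun r => ⟨fun hr => ?_, fun ⟨hr1, hr2⟩ => α.compat_mem h g r hr1 hr2⟩,
      fun r hr => ?_⟩
    · have hr1 : r ∈ α.D (Groupoid.inv h) := by
        rw [hD (Groupoid.inv h)]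
        rwa [hD (Groupoid.inv (h ≫ g))] at hr
      refine ⟨hr1, ?_⟩
      have h2 := α.mapsTo h hr1
      rw [hD h] at h2
      rwa [hD (Groupoid.inv g)]
    · have hr1 : r ∈ α.D (Groupoid.inv h) := by
        rw [hD (Groupoid.inv h)]
        rwa [hD (Groupoid.inv (h ≫ g))] at hr
      have hr2 : α.act h r ∈ α.D (Groupoid.inv g) := by
        have h2 := α.mapsTo h hr1
        rw [hD h] at h2
        rwa [hD (Groupoid.inv g)]
      exact α.compat_act h g r hr1 hr2
end

section
/- Let G be a connected groupoid and α = (A_g, α_g)_{g∈G} a partial action of G on a ring A that is group-type with respect to a transversal τ(x) = {τ_y : x → y | y ∈ G₀} for an object x. Then for any object z of G, the family τ̃(z) = {τ̃_y := τ_y τ_z⁻¹ | y ∈ G₀} is a transversal for z (in particular τ̃_z = id_z), and α is group-type with respect to τ̃(z), i.e. A_{(τ̃_y)⁻¹} = A_z and A_{τ̃_y} = A_y for all y ∈ G₀. -/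
open CategoryTheory

universe u v w

/-- **Independence of the base object for group-type partial actions.**
Let `G` be a connected groupoid and `α` a partial action of `G` on a ring `A` which is
group-type with respect to a transversal `τ(x) = {τ_y : x ⟶ y}` for the object `x`
(so `τ_x = 𝟙 x`, `A_{τ_y⁻¹} = A_x` and `A_{τ_y} = A_y` for all objects `y`).  Then for any
object `z`, the family `τ̃_y := τ_y ∘ τ_z⁻¹` (in Lean: `Groupoid.inv (τ z) ≫ τ y : z ⟶ y`)
is a transversal for `z` (in particular `τ̃_z = 𝟙 z`), and `α` is group-type with respect to
it: `A_{(τ̃_y)⁻¹} = A_z` and `A_{τ̃_y} = A_y` for all `y`. -/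
theorem partialAction_groupType_base_change {G : Type u} [Groupoid G] {A : Type v}
    [NonUnitalRing A] (α : PartialAction G A)
    (hconn : ∀ a b : G, Nonempty (a ⟶ b))
    (x : G) (τ : ∀ y : G, x ⟶ y) (hτx : τ x = 𝟙 x)
    (hsrc : ∀ y : G, α.D (Groupoid.inv (τ y)) = α.D (𝟙 x))
    (htgt : ∀ y : G, α.D (τ y) = α.D (𝟙 y))
    (z : G) :
    (Groupoid.inv (τ z) ≫ τ z = 𝟙 z) ∧
    (∀ y : G, α.D (Groupoid.inv (Groupoid.inv (τ z) ≫ τ y)) = α.D (𝟙 z)) ∧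
    (∀ y : G, α.D (Groupoid.inv (τ z) ≫ τ y) = α.D (𝟙 y)) := by
  have inv_inv : ∀ {a b : G} (f : a ⟶ b), Groupoid.inv (Groupoid.inv f) = f := by
    intros; simp [Groupoid.inv_eq_inv]
  have inv_comp' : ∀ {a b c : G} (f : a ⟶ b) (g : b ⟶ c),
      Groupoid.inv (f ≫ g) = Groupoid.inv g ≫ Groupoid.inv f := by
    intros; simp [Groupoid.inv_eq_inv]
  have key : ∀ z y : G, α.D (Groupoid.inv (τ z) ≫ τ y) = α.D (𝟙 y) := by
    intro z y
    apply Set.Subset.antisymm (α.subset_target _)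
    intro r hr
    have hr' : r ∈ α.D (τ y) := (htgt y) ▸ hr
    have h1 : r ∈ α.D (Groupoid.inv (Groupoid.inv (τ y))) := by rw [inv_inv]; exact hr'
    have h2 : α.act (Groupoid.inv (τ y)) r ∈ α.D (Groupoid.inv (τ z)) := by
      rw [hsrc z, ← hsrc y]
      exact α.mapsTo (Groupoid.inv (τ y)) h1
    have := α.compat_mem (Groupoid.inv (τ y)) (τ z) r h1 h2
    rwa [inv_comp', inv_inv] at this
  refine ⟨by simp, ?_, key z⟩
  intro y
  rw [inv_comp', inv_inv]
  exact key y z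
end
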